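/- Let ρ and σ be density matrices on a finite-dimensional Hilbert space and let {E_j} be a POVM (positive operators summing to the identity). Then F(ρ,σ) ≤ (Σ_j √(Tr(ρ E_j) Tr(σ E_j)))², where F(ρ,σ) = (Tr √(σ^{1/2} ρ σ^{1/2}))². -/

import Mathlib

open Matrix Kronecker Finset ComplexOrder

noncomputable section
namespace QAE

/-- Partial trace over the second tensor factor. -/
def ptraceB {A B : Type*} [Fintype B] (ρ : Matrix (A × B) (A × B) ℂ) : Matrix A A ℂ :=
  Matrix.of fun i j => ∑ k : B, ρ (i, k) (j, k)

/-- Partial trace over the first tensor factor. -/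
def ptraceA {A B : Type*} [Fintype A] (ρ : Matrix (A × B) (A × B) ℂ) : Matrix B B ℂ :=
  Matrix.of fun i j => ∑ k : A, ρ (k, i) (k, j)

/-- Outer product |v⟩⟨v|. -/
def outer {A : Type*} (v : A → ℂ) : Matrix A A ℂ := Matrix.vecMulVec v (star v)

/-- The positive semidefinite square root `U * diagonal (√λ) * Uᴴ`, as `Matrix.PosSemidef.sqrt`
was defined in the older Mathlib. -/
def psdSqrt {n : Type*} [Fintype n] [DecidableEq n] {A : Matrix n n ℂ} (hA : A.PosSemidef) :
    Matrix n n ℂ :=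
  (hA.1.eigenvectorUnitary : Matrix n n ℂ) *
    diagonal ((↑) ∘ (Real.sqrt ·) ∘ hA.1.eigenvalues) * (star hA.1.eigenvectorUnitary : Matrix n n ℂ)

lemma psdSqrt_psd {n : Type*} [Fintype n] [DecidableEq n] {A : Matrix n n ℂ} (hA : A.PosSemidef) :
    (psdSqrt hA).PosSemidef := by
  unfold psdSqrt
  have hd : (diagonal ((↑) ∘ (Real.sqrt ·) ∘ hA.1.eigenvalues) : Matrix n n ℂ).PosSemidef := by
    refine PosSemidef.diagonal ?_
    intro i
    simp [Complex.zero_le_real, Real.sqrt_nonneg]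
  have := hd.mul_mul_conjTranspose_same (hA.1.eigenvectorUnitary : Matrix n n ℂ)
  simpa [star_eq_conjTranspose] using this

lemma sandwich_psd {n : Type*} [Fintype n] [DecidableEq n] {ρ σ : Matrix n n ℂ}
    (hρ : ρ.PosSemidef) (hσ : σ.PosSemidef) :
    (psdSqrt hσ * ρ * psdSqrt hσ).PosSemidef := by
  have h := hρ.mul_mul_conjTranspose_same (psdSqrt hσ)
  rwa [(psdSqrt_psd hσ).isHermitian.eq] at h

-- Squared Uhlmann fidelity F(ρ,σ) = (Tr √(σ^{1/2} ρ σ^{1/2}))².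
open Classical in
def sqFidelity {n : Type*} [Fintype n] [DecidableEq n] (ρ σ : Matrix n n ℂ) : ℝ :=
  if h : ρ.PosSemidef ∧ σ.PosSemidef then
    ((psdSqrt (sandwich_psd h.1 h.2)).trace).re ^ 2
  else 0

/-- A density matrix: positive semidefinite with unit trace. -/
def IsDensity {n : Type*} [Fintype n] [DecidableEq n] (ρ : Matrix n n ℂ) : Prop :=
  ρ.PosSemidef ∧ ρ.trace = 1

end QAE
end

section helpers

section aux
variable {n : Type*} [Fintype n] [DecidableEq n]

lemma aux_trace_re_nonneg {A : Matrix n n ℂ} (hA : A.PosSemidef) : 0 ≤ A.trace.re := by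
  rw [Matrix.trace, Complex.re_sum]
  apply Finset.sum_nonneg
  intro i _
  have h := hA.dotProduct_mulVec_nonneg (Pi.single i 1)
  have e : star (Pi.single i 1) ⬝ᵥ A *ᵥ Pi.single i 1 = A i i := by
    simp [mulVec_single, dotProduct, Pi.single_apply]
  rw [e] at h
  exact (Complex.le_def.mp h).1

omit [DecidableEq n] in
lemma aux_trace_CS (B C : Matrix n n ℂ) :
    ((Bᴴ * C).trace).re ≤ Real.sqrt ((Bᴴ * B).trace.re) * Real.sqrt ((Cᴴ * C).trace.re) := by
  classical
  let f : Matrix n n ℂ → EuclideanSpace ℂ (n × n) := fun P => WithLp.toLp 2 (fun p : n × n => P p.1 p.2)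
  have hinner : ∀ P Q : Matrix n n ℂ, (inner ℂ (f P) (f Q) : ℂ) = (Pᴴ * Q).trace := by
    intro P Q
    rw [PiLp.inner_apply, Matrix.trace, Fintype.sum_prod_type]
    simp only [Matrix.diag, Matrix.mul_apply, Matrix.conjTranspose_apply, RCLike.inner_apply, f]
    rw [Finset.sum_comm]
    congr 1; ext y; congr 1; ext x; rw [mul_comm]; rfl
  have key : (inner ℂ (f B) (f C) : ℂ).re ≤ ‖f B‖ * ‖f C‖ := by
    calc (inner ℂ (f B) (f C) : ℂ).re ≤ ‖(inner ℂ (f B) (f C) : ℂ)‖ := Complex.re_le_norm _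
    _ ≤ ‖f B‖ * ‖f C‖ := norm_inner_le_norm _ _
  have hn : ∀ P : Matrix n n ℂ, ‖f P‖ = Real.sqrt ((Pᴴ * P).trace.re) := by
    intro P
    rw [← hinner]
    rw [show ((inner ℂ (f P) (f P) : ℂ)).re = RCLike.re (inner ℂ (f P) (f P) : ℂ) from rfl]
    rw [inner_self_eq_norm_sq (𝕜 := ℂ), Real.sqrt_sq (norm_nonneg _)]
  rw [← hinner, ← hn, ← hn]
  exact key

end aux

lemma psdSqrt_mul_self {n : Type*} [Fintype n] [DecidableEq n] {A : Matrix n n ℂ}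
    (hA : A.PosSemidef) : QAE.psdSqrt hA * QAE.psdSqrt hA = A := by
  have hUU : (star hA.1.eigenvectorUnitary : Matrix n n ℂ) * (hA.1.eigenvectorUnitary : Matrix n n ℂ) = 1 :=
    mem_unitaryGroup_iff'.mp hA.1.eigenvectorUnitary.2
  conv_rhs => rw [hA.1.spectral_theorem, Unitary.conjStarAlgAut_apply]
  unfold QAE.psdSqrt
  calc _ = (hA.1.eigenvectorUnitary : Matrix n n ℂ) *
        (diagonal ((↑) ∘ (Real.sqrt ·) ∘ hA.1.eigenvalues) *
          ((star hA.1.eigenvectorUnitary : Matrix n n ℂ) * (hA.1.eigenvectorUnitary : Matrix n n ℂ)) *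
          diagonal ((↑) ∘ (Real.sqrt ·) ∘ hA.1.eigenvalues)) *
        (star hA.1.eigenvectorUnitary : Matrix n n ℂ) := by simp only [Matrix.mul_assoc]
    _ = _ := by
      rw [hUU, Matrix.mul_one, diagonal_mul_diagonal]
      congr 2
      ext i j
      rw [diagonal_apply, diagonal_apply]
      split_ifs with h
      · subst h
        simp only [Function.comp_apply]
        rw [← Complex.ofReal_mul, Real.mul_self_sqrt (hA.eigenvalues_nonneg i)]
        rfl
      · rfl

lemma key1 (a : ℝ) (ha : 0 ≤ a) : (Real.sqrt a)⁻¹ * a = Real.sqrt a := by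
  rcases ha.eq_or_lt with h|h
  · simp [← h]
  · have hs : Real.sqrt a ≠ 0 := by positivity
    field_simp
    exact (Real.sq_sqrt ha).symm

lemma key2 (a : ℝ) (ha : 0 ≤ a) :
    ((Real.sqrt a)⁻¹*(Real.sqrt a)⁻¹) * (a * ((Real.sqrt a)⁻¹*(Real.sqrt a)⁻¹))
      = (Real.sqrt a)⁻¹*(Real.sqrt a)⁻¹ := by
  rcases ha.eq_or_lt with h|h
  · simp [← h]
  · have hs : Real.sqrt a ≠ 0 := by positivity
    field_simp
    exact (Real.sq_sqrt ha).symm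

lemma aux_partial_isometry {n : Type*} [Fintype n] [DecidableEq n] (A M : Matrix n n ℂ)
    (hM : M.PosSemidef) (hMA : M = Aᴴ * A) :
    ∃ U : Matrix n n ℂ, (1 - U * Uᴴ).PosSemidef ∧ (Uᴴ * A).trace = (QAE.psdSqrt hM).trace := by
  classical
  subst hMA
  set hH : (Aᴴ * A).IsHermitian := hM.1 with hHdef
  set W : Matrix n n ℂ := (hH.eigenvectorUnitary : Matrix n n ℂ) with hWdef
  have hWW : star W * W = 1 := mem_unitaryGroup_iff'.mp hH.eigenvectorUnitary.2
  have hWW' : W * star W = 1 := mem_unitaryGroup_iff.mp hH.eigenvectorUnitary.2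
  have hWW1 : ∀ X : Matrix n n ℂ, star W * (W * X) = X := fun X => by
    rw [← mul_assoc, hWW, one_mul]
  have hWW2 : ∀ X : Matrix n n ℂ, W * (star W * X) = X := fun X => by
    rw [← mul_assoc, hWW', one_mul]
  set d : n → ℝ := hH.eigenvalues with hddef
  have hd : ∀ i, 0 ≤ d i := hM.eigenvalues_nonneg
  set g : n → ℝ := fun i => (Real.sqrt (d i))⁻¹ with hgdef
  set G : Matrix n n ℂ := diagonal (fun i => (g i : ℂ)) with hGdef
  set D : Matrix n n ℂ := diagonal (fun i => (d i : ℂ)) with hDdef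
  have hGH : Gᴴ = G := by
    rw [hGdef, diagonal_conjTranspose, diagonal_eq_diagonal_iff]
    intro i
    simp [Complex.conj_ofReal]
  have hspec : Aᴴ * A = W * (D * star W) := by
    rw [← mul_assoc]
    convert hH.spectral_theorem using 1
    rw [Unitary.conjStarAlgAut_apply]; rfl
  set U : Matrix n n ℂ := A * (W * (G * star W)) with hUdef
  have hUH : Uᴴ = W * (G * (star W * Aᴴ)) := by
    rw [hUdef]
    simp only [conjTranspose_mul, hGH, conjTranspose_conjTranspose, star_eq_conjTranspose]
    simp [Matrix.mul_assoc]
  have hmid : star W * (Aᴴ * (A * W)) = D := by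
    calc star W * (Aᴴ * (A * W)) = star W * ((Aᴴ * A) * W) := by rw [mul_assoc]
    _ = star W * (W * (D * (star W * W))) := by rw [hspec]; simp [Matrix.mul_assoc]
    _ = D := by rw [hWW, mul_one, hWW1]
  -- projection property
  have hGDG : (G * G) * (D * (G * G)) = G * G := by
    rw [hGdef, hDdef]
    simp only [diagonal_mul_diagonal]
    rw [diagonal_eq_diagonal_iff]
    intro i
    norm_cast
    exact key2 (d i) (hd i)
  have hP : U * Uᴴ = A * (W * ((G * G) * (star W * Aᴴ))) := by
    rw [hUdef, hUH]
    simp only [Matrix.mul_assoc, hWW1]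
  have hproj : (U * Uᴴ) * (U * Uᴴ) = U * Uᴴ := by
    rw [hP]
    calc A * (W * ((G * G) * (star W * Aᴴ))) * (A * (W * ((G * G) * (star W * Aᴴ))))
        = A * (W * ((G * G) * ((star W * (Aᴴ * (A * W))) * ((G * G) * (star W * Aᴴ))))) := by
          simp only [Matrix.mul_assoc]
      _ = A * (W * (((G * G) * (D * (G * G))) * (star W * Aᴴ))) := by
          rw [hmid]; simp only [Matrix.mul_assoc]
      _ = A * (W * ((G * G) * (star W * Aᴴ))) := by rw [hGDG]
  have hPH : (U * Uᴴ)ᴴ = U * Uᴴ := by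
    simp [conjTranspose_mul]
  have hpsd : (1 - U * Uᴴ).PosSemidef := by
    have h1 : (1 - U * Uᴴ)ᴴ * (1 - U * Uᴴ) = 1 - U * Uᴴ := by
      rw [sub_eq_add_neg, conjTranspose_add, conjTranspose_neg, conjTranspose_one, hPH]
      rw [← sub_eq_add_neg]
      rw [sub_mul, mul_sub, mul_sub, one_mul, mul_one, hproj]
      simp
    rw [← h1]
    exact posSemidef_conjTranspose_mul_self _
  refine ⟨U, hpsd, ?_⟩
  have htr1 : (Uᴴ * A).trace = (G * D).trace := by
    rw [hUH]
    calc (W * (G * (star W * Aᴴ)) * A).trace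
        = (W * (G * (star W * (Aᴴ * A)))).trace := by simp only [Matrix.mul_assoc]
      _ = ((G * (star W * (Aᴴ * A))) * W).trace := trace_mul_comm _ _
      _ = (G * (star W * (Aᴴ * (A * W)))).trace := by simp only [Matrix.mul_assoc]
      _ = (G * D).trace := by rw [hmid]
  have htr2 : (QAE.psdSqrt hM).trace = (G * D).trace := by
    have hsq : QAE.psdSqrt hM = W * (diagonal ((↑) ∘ Real.sqrt ∘ d : n → ℂ) * star W) := by
      rw [QAE.psdSqrt, mul_assoc]
    have hdiag : (diagonal ((↑) ∘ Real.sqrt ∘ d : n → ℂ)) = G * D := by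
      rw [hGdef, hDdef, diagonal_mul_diagonal, diagonal_eq_diagonal_iff]
      intro i
      rw [Function.comp_apply, Function.comp_apply]
      norm_cast
      exact (key1 (d i) (hd i)).symm
    calc (QAE.psdSqrt hM).trace = ((diagonal ((↑) ∘ Real.sqrt ∘ d : n → ℂ) * star W) * W).trace := by
          rw [hsq, trace_mul_comm]
      _ = (diagonal ((↑) ∘ Real.sqrt ∘ d : n → ℂ)).trace := by rw [mul_assoc, hWW, mul_one]
      _ = (G * D).trace := by rw [hdiag]
  rw [htr1, htr2]

end helpers

/-- fidelity is bounded by the measurement-induced fidelity of a POVM. -/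
theorem stmt1 {n : Type*} [Fintype n] [DecidableEq n]
    (ρ σ : Matrix n n ℂ) (hρ : QAE.IsDensity ρ) (hσ : QAE.IsDensity σ)
    {m : ℕ} (E : Fin m → Matrix n n ℂ)
    (hE : ∀ j, (E j).PosSemidef) (hsum : ∑ j, E j = 1) :
    QAE.sqFidelity ρ σ ≤
      (∑ j, Real.sqrt (((ρ * E j).trace).re * ((σ * E j).trace).re)) ^ 2 := by
  classical
  set R : Matrix n n ℂ := QAE.psdSqrt hρ.1 with hRdef
  set S : Matrix n n ℂ := QAE.psdSqrt hσ.1 with hSdef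
  have hRH : Rᴴ = R := (QAE.psdSqrt_psd hρ.1).1
  have hSH : Sᴴ = S := (QAE.psdSqrt_psd hσ.1).1
  have hRR : R * R = ρ := psdSqrt_mul_self hρ.1
  have hSS : S * S = σ := psdSqrt_mul_self hσ.1
  set A : Matrix n n ℂ := R * S with hAdef
  set hM : (S * ρ * S).PosSemidef := QAE.sandwich_psd hρ.1 hσ.1 with hMdef
  have hMA : S * ρ * S = Aᴴ * A := by
    rw [hAdef, conjTranspose_mul, hRH, hSH, ← hRR]
    simp only [Matrix.mul_assoc]
  obtain ⟨U, hU1, hU2⟩ := aux_partial_isometry A (S * ρ * S) hM hMA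
  have hfid : QAE.sqFidelity ρ σ = (((QAE.psdSqrt hM).trace).re) ^ 2 := by
    rw [QAE.sqFidelity, dif_pos ⟨hρ.1, hσ.1⟩]
  rw [hfid]
  set t : ℝ := ((QAE.psdSqrt hM).trace).re with htdef
  have ht0 : 0 ≤ t := aux_trace_re_nonneg (QAE.psdSqrt_psd hM)
  have hmain : t ≤ ∑ j, Real.sqrt (((ρ * E j).trace).re * ((σ * E j).trace).re) := by
    have hAsum : A = ∑ j, R * E j * S := by
      have h1 : A = R * (∑ j, E j) * S := by rw [hsum, mul_one]
      rw [h1, Matrix.mul_sum, Finset.sum_mul]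
    have htr : t = ∑ j, ((Uᴴ * (R * E j * S)).trace).re := by
      rw [htdef, ← hU2, hAsum, Matrix.mul_sum, trace_sum, Complex.re_sum]
    rw [htr]
    apply Finset.sum_le_sum
    intro j _
    set F : Matrix n n ℂ := QAE.psdSqrt (hE j) with hFdef
    have hFH : Fᴴ = F := (QAE.psdSqrt_psd (hE j)).1
    have hFF : F * F = E j := psdSqrt_mul_self (hE j)
    have hBC : Uᴴ * (R * E j * S) = (F * R * U)ᴴ * (F * S) := by
      simp only [conjTranspose_mul, hFH, hRH, conjTranspose_conjTranspose, ← hFF]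
      simp only [Matrix.mul_assoc]
    rw [hBC]
    refine le_trans (aux_trace_CS (F * R * U) (F * S)) ?_
    -- second factor is an equality
    have hb2 : ((F * S)ᴴ * (F * S)).trace = (σ * E j).trace := by
      have h1 : (F * S)ᴴ * (F * S) = S * (E j * S) := by
        simp only [conjTranspose_mul, hFH, hSH, ← hFF]
        simp only [Matrix.mul_assoc]
      rw [h1]
      calc (S * (E j * S)).trace = ((E j * S) * S).trace := trace_mul_comm _ _
        _ = (E j * (S * S)).trace := by rw [mul_assoc]
        _ = (σ * E j).trace := by rw [hSS, trace_mul_comm]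
    -- first factor is an inequality
    have hb1 : (((F * R * U)ᴴ * (F * R * U)).trace).re ≤ ((ρ * E j).trace).re := by
      have e1 : ((F * R * U)ᴴ * (F * R * U)).trace
          = ((R * (E j * R)) * (U * Uᴴ)).trace := by
        have hX : (F * R * U)ᴴ * (F * R * U) = Uᴴ * ((R * (E j * R)) * U) := by
          simp only [conjTranspose_mul, hFH, hRH, ← hFF]
          simp only [Matrix.mul_assoc]
        rw [hX, trace_mul_comm]
        simp only [Matrix.mul_assoc]
      have e2 : ((F * R) * (1 - U * Uᴴ) * (F * R)ᴴ).trace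
          = ((R * (E j * R)) * (1 - U * Uᴴ)).trace := by
        have h1 : (F * R)ᴴ = R * F := by rw [conjTranspose_mul, hFH, hRH]
        rw [h1, trace_mul_comm]
        have h2 : R * F * (F * R * (1 - U * Uᴴ)) = (R * (E j * R)) * (1 - U * Uᴴ) := by
          simp only [← hFF, Matrix.mul_assoc]
        rw [← h2]
      have e3 : (ρ * E j).trace = ((R * (E j * R)) * 1).trace := by
        rw [mul_one, ← hRR]
        calc (R * R * E j).trace = (R * E j * R).trace := (trace_mul_cycle R (E j) R).symm
          _ = (R * (E j * R)).trace := by rw [mul_assoc]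
      have hkey : (ρ * E j).trace
          = ((F * R * U)ᴴ * (F * R * U)).trace
            + ((F * R) * (1 - U * Uᴴ) * (F * R)ᴴ).trace := by
        rw [e1, e2, e3, Matrix.mul_sub, mul_one, Matrix.trace_sub]
        ring
      have hpos : 0 ≤ (((F * R) * (1 - U * Uᴴ) * (F * R)ᴴ).trace).re :=
        aux_trace_re_nonneg (hU1.mul_mul_conjTranspose_same (F * R))
      have := congrArg Complex.re hkey
      rw [Complex.add_re] at this
      linarith
    have hσnn : 0 ≤ ((σ * E j).trace).re := by
      rw [← hb2]
      exact aux_trace_re_nonneg (posSemidef_conjTranspose_mul_self _)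
    rw [hb2, ← Real.sqrt_mul (aux_trace_re_nonneg (posSemidef_conjTranspose_mul_self (F * R * U)))]
    apply Real.sqrt_le_sqrt
    exact mul_le_mul_of_nonneg_right hb1 hσnn
  calc t ^ 2 ≤ (∑ j, Real.sqrt (((ρ * E j).trace).re * ((σ * E j).trace).re)) ^ 2 :=
    pow_le_pow_left₀ ht0 hmain 2
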